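/- Sufficient criterion for generic unfolding of a cubic tangency (Lemma on cubic tangencies): let ρ_{u,v}(t) = (x_{u,v}(t), y_{u,v}(t)) be a two-parameter family of C⁴ regular plane curves, C⁴ in (u,v,t), satisfying: (i) x_{0,0}(0)=0, y_{0,0}(0)=ẏ_{0,0}(0)=ÿ_{0,0}(0)=0, y⃛_{0,0}(0) ≠ 0; (ii) there is a C² function t_{u,v} with t_{0,0}=0 and ÿ_{u,v}(t_{u,v})=0; (iii) there is a C² function v(u) with v(0)=0 and ẏ_{u,v(u)}(t_{u,v(u)})=0; (iv) (∂_u y_{u,v(u)})(0)|_{u=0} ≠ 0 and (∂_v ẏ_{0,v})(0)|_{v=0} ≠ 0. Then, after the reparametrization (u,w) with w = v - v(u), the Taylor coefficients a₁ = ∂_u ŷ(0), a₃ = ∂_{ut} ŷ(0), a₄ = ∂_{wt} ŷ(0) of ŷ_{u,w} := y_{u,w+v(u)} satisfy a₁ ≠ 0, a₃ = 0 and a₄ ≠ 0; in particular a₁a₄ - a₂a₃ = a₁a₄ ≠ 0. -/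

import Mathlib

open Filter Topology

/-- Sufficient criterion for generic unfolding of a cubic tangency: for a two-parameter
family of `C⁴` regular plane curves `ρ_{u,v}(t) = (x_{u,v}(t), y_{u,v}(t))` satisfying
(i) a cubic tangency of `ρ_{0,0}` with the `x`-axis at `t = 0`, (ii) a `C²` continuation
`t_{u,v}` of inflection parameters, (iii) a `C²` function `v(u)` killing the slope at the
inflection point, and (iv) the two nondegeneracy conditions, the Taylor coefficients of
`ŷ_{u,w} = y_{u,w+v(u)}` satisfy `a₁ ≠ 0`, `a₃ = 0`, `a₄ ≠ 0`, so `a₁a₄ - a₂a₃ = a₁a₄ ≠ 0`. -/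
theorem cubic_tangency_criterion (x y : ℝ → ℝ → ℝ → ℝ) (T : ℝ → ℝ → ℝ) (V : ℝ → ℝ)
    (hx : ContDiff ℝ 4 (fun p : ℝ × ℝ × ℝ => x p.1 p.2.1 p.2.2))
    (hy : ContDiff ℝ 4 (fun p : ℝ × ℝ × ℝ => y p.1 p.2.1 p.2.2))
    (hreg : ∀ᶠ p : ℝ × ℝ × ℝ in 𝓝 0,
      ((deriv (fun t => x p.1 p.2.1 t) p.2.2, deriv (fun t => y p.1 p.2.1 t) p.2.2) : ℝ × ℝ)
        ≠ (0, 0))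
    (hx0 : x 0 0 0 = 0)
    (hy0 : y 0 0 0 = 0)
    (hy1 : deriv (fun t => y 0 0 t) 0 = 0)
    (hy2 : deriv (deriv (fun t => y 0 0 t)) 0 = 0)
    (hy3 : deriv (deriv (deriv (fun t => y 0 0 t))) 0 ≠ 0)
    (hT : ContDiff ℝ 2 (fun p : ℝ × ℝ => T p.1 p.2)) (hT0 : T 0 0 = 0)
    (hTinfl : ∀ᶠ p : ℝ × ℝ in 𝓝 0,
      deriv (deriv (fun t => y p.1 p.2 t)) (T p.1 p.2) = 0)
    (hV : ContDiff ℝ 2 V) (hV0 : V 0 = 0)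
    (hVslope : ∀ᶠ u in 𝓝 (0 : ℝ), deriv (fun t => y u (V u) t) (T u (V u)) = 0)
    (ha1 : deriv (fun u => y u (V u) 0) 0 ≠ 0)
    (ha4 : deriv (fun v => deriv (fun t => y 0 v t) 0) 0 ≠ 0) :
    deriv (fun u => y u (V u) 0) 0 ≠ 0 ∧
    deriv (fun u => deriv (fun t => y u (V u) t) 0) 0 = 0 ∧
    deriv (fun w => deriv (fun t => y 0 (w + V 0) t) 0) 0 ≠ 0 ∧
    deriv (fun u => y u (V u) 0) 0 *
      deriv (fun w => deriv (fun t => y 0 (w + V 0) t) 0) 0 ≠ 0 := by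
  -- `a₄`: rewrite `w + V 0 = w`.
  have ha4' : deriv (fun w => deriv (fun t => y 0 (w + V 0) t) 0) 0 ≠ 0 := by
    simpa only [hV0, add_zero] using ha4
  -- The main content: `a₃ = 0`.
  set Y : ℝ × ℝ × ℝ → ℝ := fun p => y p.1 p.2.1 p.2.2 with hYdef
  -- `Ŷ p = ∂ₜ y` expressed via the joint fderiv
  have hYhat : ∀ p : ℝ × ℝ × ℝ, deriv (fun s => y p.1 p.2.1 s) p.2.2
      = fderiv ℝ Y p ((0:ℝ),(0:ℝ),(1:ℝ)) := by
    intro p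
    have h1 : HasFDerivAt Y (fderiv ℝ Y p) p := ((hy.differentiable (by norm_num)) p).hasFDerivAt
    have h2 : HasDerivAt (fun s : ℝ => ((p.1 : ℝ), (p.2.1 : ℝ), s)) ((0:ℝ),(0:ℝ),(1:ℝ)) p.2.2 :=
      (hasDerivAt_const _ _).prodMk ((hasDerivAt_const _ _).prodMk (hasDerivAt_id _))
    exact (h1.comp_hasDerivAt p.2.2 h2).deriv
  have hYhatC : ContDiff ℝ 3 (fun p : ℝ × ℝ × ℝ => fderiv ℝ Y p ((0:ℝ),(0:ℝ),(1:ℝ))) :=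
    (hy.fderiv_right (by norm_num)).clm_apply contDiff_const
  -- F (u, t) = ∂ₜ y (u, V u, t)
  set F : ℝ × ℝ → ℝ := fun q => fderiv ℝ Y (q.1, V q.1, q.2) ((0:ℝ),(0:ℝ),(1:ℝ)) with hFdef
  have hFC : ContDiff ℝ 2 F :=
    (hYhatC.of_le (by norm_num)).comp
      (contDiff_fst.prodMk (((hV.comp contDiff_fst)).prodMk contDiff_snd))
  have hFeq : ∀ u t : ℝ, F (u, t) = deriv (fun s => y u (V u) s) t := by
    intro u t; exact (hYhat (u, V u, t)).symm
  -- τ u = T u (V u), with τ 0 = 0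
  set τ : ℝ → ℝ := fun u => T u (V u) with hτdef
  have hτC : ContDiff ℝ 2 τ := hT.comp (contDiff_id.prodMk hV)
  have hτ0 : τ 0 = 0 := by simp [hτdef, hV0, hT0]
  -- fderiv of F at (0,0)
  have hFd : HasFDerivAt F (fderiv ℝ F (0, 0)) (0, 0) :=
    ((hFC.differentiable (by norm_num)) (0, 0)).hasFDerivAt
  -- ∂ₜ F (0,0) = ÿ₀₀(0) = 0
  have hFt : fderiv ℝ F ((0:ℝ), (0:ℝ)) ((0:ℝ), (1:ℝ)) = 0 := by
    have h2 : HasDerivAt (fun t : ℝ => ((0:ℝ), t)) ((0:ℝ), (1:ℝ)) 0 :=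
      (hasDerivAt_const _ _).prodMk (hasDerivAt_id _)
    have h3 : deriv (fun t : ℝ => F (0, t)) 0 = fderiv ℝ F ((0:ℝ),(0:ℝ)) ((0:ℝ),(1:ℝ)) :=
      (hFd.comp_hasDerivAt 0 h2).deriv
    have h4 : (fun t : ℝ => F (0, t)) = deriv (fun s => y 0 0 s) := by
      funext t; rw [hFeq 0 t, hV0]
    rw [← h3, h4, hy2]
  -- h u = F (u, τ u) vanishes near 0, hence its derivative at 0 is 0
  have hcurve : HasDerivAt (fun u : ℝ => (u, τ u)) ((1:ℝ), deriv τ 0) 0 :=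
    (hasDerivAt_id _).prodMk ((hτC.differentiable (by norm_num)) 0).hasDerivAt
  have hcomp : HasDerivAt (fun u => F (u, τ u))
      (fderiv ℝ F ((0:ℝ), (0:ℝ)) ((1:ℝ), deriv τ 0)) 0 := by
    have : HasFDerivAt F (fderiv ℝ F (0, 0)) ((0:ℝ), τ 0) := by rw [hτ0]; exact hFd
    exact this.comp_hasDerivAt 0 hcurve
  have hzero : deriv (fun u => F (u, τ u)) 0 = 0 := by
    have heq : (fun u => F (u, τ u)) =ᶠ[𝓝 (0:ℝ)] (fun _ => (0:ℝ)) := by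
      filter_upwards [hVslope] with u hu
      rw [hFeq u (τ u)]; exact hu
    rw [heq.deriv_eq]; simp
  have hmix : fderiv ℝ F ((0:ℝ), (0:ℝ)) ((1:ℝ), deriv τ 0) = 0 := by
    rw [← hcomp.deriv, hzero]
  -- decompose (1, τ'0) = (1,0) + τ'0 • (0,1)
  have hu0 : fderiv ℝ F ((0:ℝ), (0:ℝ)) ((1:ℝ), (0:ℝ)) = 0 := by
    have hdec : ((1:ℝ), deriv τ 0) = ((1:ℝ), (0:ℝ)) + deriv τ 0 • ((0:ℝ), (1:ℝ)) := by
      simp [Prod.ext_iff]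
    rw [hdec, map_add, map_smul, hFt, smul_zero, add_zero] at hmix
    exact hmix
  -- a₃ = ∂ᵤ F (0,0)
  have ha3 : deriv (fun u => deriv (fun t => y u (V u) t) 0) 0 = 0 := by
    have h2 : HasDerivAt (fun u : ℝ => (u, (0:ℝ))) ((1:ℝ), (0:ℝ)) 0 :=
      (hasDerivAt_id _).prodMk (hasDerivAt_const _ _)
    have h3 : deriv (fun u : ℝ => F (u, 0)) 0 = fderiv ℝ F ((0:ℝ),(0:ℝ)) ((1:ℝ),(0:ℝ)) :=
      (hFd.comp_hasDerivAt (f := fun u : ℝ => (u, (0:ℝ))) 0 h2).deriv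
    have h4 : (fun u : ℝ => F (u, 0)) = fun u => deriv (fun t => y u (V u) t) 0 := by
      funext u; exact hFeq u 0
    rw [← h4, h3, hu0]
  exact ⟨ha1, ha3, ha4', mul_ne_zero ha1 ha4'⟩
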